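/- Let 𝔤 = 𝔤_{4.3} be the 4-dimensional real Lie algebra with basis e₁,...,e₄ and nonzero brackets [e₁,e₄] = e₁ and [e₃,e₄] = e₂. A 4×4 real matrix R equals η·Id + D for some η ∈ ℝ and some derivation D of 𝔤 if and only if R₂₁ = R₃₁ = R₄₁ = 0, R₃₂ = R₄₂ = R₄₃ = 0, R₁₂ = R₁₃ = 0, and R₃₃ = R₂₂. In this case η = R₄₄. -/
import Mathlib


open Matrix

/-- The Lie bracket of the Lie algebra, in coordinates. -/
def br (x y : Fin 4 → ℝ) : Fin 4 → ℝ :=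
  ![(x 0 * y 3 - x 3 * y 0), (x 2 * y 3 - x 3 * y 2), (0:ℝ), (0:ℝ)]

/-- `D` (acting via `mulVec`) is a derivation of the bracket. -/
def IsDer (D : Matrix (Fin 4) (Fin 4) ℝ) : Prop :=
  ∀ x y : Fin 4 → ℝ, D.mulVec (br x y) = br (D.mulVec x) y + br x (D.mulVec y)

lemma isDer_explicit (a b c d f g : ℝ) :
    IsDer !![a,0,0,d; 0,b,c,f; 0,0,b,g; 0,0,0,0] := by
  intro x y
  funext i
  fin_cases i <;>
    simp [Matrix.mulVec, dotProduct, br, Fin.sum_univ_four] <;> ring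

lemma der_entries (D : Matrix (Fin 4) (Fin 4) ℝ) (hD : IsDer D) :
    D 1 0 = 0 ∧ D 2 0 = 0 ∧ D 3 0 = 0 ∧ D 2 1 = 0 ∧ D 3 1 = 0 ∧ D 3 2 = 0 ∧
    D 0 1 = 0 ∧ D 0 2 = 0 ∧ D 2 2 = D 1 1 ∧ D 3 3 = 0 := by
  have h03 := hD ![1,0,0,0] ![0,0,0,1]
  have h23 := hD ![0,0,1,0] ![0,0,0,1]
  have h02 := hD ![1,0,0,0] ![0,0,1,0]
  have h13 := hD ![0,1,0,0] ![0,0,0,1]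
  have e1 := congrFun h03 0
  have e2 := congrFun h03 1
  have e3 := congrFun h03 2
  have e4 := congrFun h03 3
  have e5 := congrFun h23 0
  have e6 := congrFun h23 1
  have e7 := congrFun h23 2
  have e8 := congrFun h23 3
  have e9 := congrFun h02 0
  have e10 := congrFun h13 0
  have e11 := congrFun h13 1
  simp [Matrix.mulVec, dotProduct, br, Fin.sum_univ_four] at e1 e2 e3 e4 e5 e6 e7 e8 e9 e10 e11
  refine ⟨?_, ?_, ?_, ?_, ?_, ?_, ?_, ?_, ?_, ?_⟩ <;> linarith

theorem stmt_13 (R : Matrix (Fin 4) (Fin 4) ℝ) :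
    ((∃ (η : ℝ) (D : Matrix (Fin 4) (Fin 4) ℝ), IsDer D ∧
        R = η • (1 : Matrix (Fin 4) (Fin 4) ℝ) + D) ↔
      (R 1 0 = 0 ∧ R 2 0 = 0 ∧ R 3 0 = 0 ∧ R 2 1 = 0 ∧ R 3 1 = 0 ∧ R 3 2 = 0 ∧ R 0 1 = 0 ∧ R 0 2 = 0 ∧ R 2 2 = R 1 1)) ∧
    (∀ (η : ℝ) (D : Matrix (Fin 4) (Fin 4) ℝ), IsDer D →
      R = η • (1 : Matrix (Fin 4) (Fin 4) ℝ) + D → η = R 3 3) := by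
  constructor
  · constructor
    · rintro ⟨η, D, hD, rfl⟩
      obtain ⟨d1, d2, d3, d4, d5, d6, d7, d8, d9, d10⟩ := der_entries D hD
      simp [Matrix.add_apply, Matrix.smul_apply, Matrix.one_apply]
      refine ⟨d1, d2, d3, d4, d5, d6, d7, d8, ?_⟩
      linarith
    · rintro ⟨h1, h2, h3, h4, h5, h6, h7, h8, h9⟩
      refine ⟨R 3 3,
        !![R 0 0 - R 3 3, 0, 0, R 0 3;
           0, R 1 1 - R 3 3, R 1 2, R 1 3;
           0, 0, R 1 1 - R 3 3, R 2 3;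
           0, 0, 0, 0], isDer_explicit _ _ _ _ _ _, ?_⟩
      ext i j
      fin_cases i <;> fin_cases j <;>
        simp [Matrix.add_apply, Matrix.smul_apply, Matrix.one_apply, h1, h2, h3, h4,
          h5, h6, h7, h8, h9, Matrix.vecHead, Matrix.vecTail]
  · rintro η D hD rfl
    have h := (der_entries D hD).2.2.2.2.2.2.2.2.2
    simp [Matrix.add_apply, Matrix.smul_apply, Matrix.one_apply, h]
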